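/- Let (α_k)_{k≥0} be a sequence of nonzero complex numbers with strictly decreasing moduli 1 > |α₀| > |α₁| > ⋯, and let (p_k)_{k≥0} be vectors in a normed space such that for every integer n ≥ 1, Σ_{k=0}^∞ α_k^n v_k = 0, where v_k := p_k applied to (α_k I − R) for a bounded linear operator R, and suppose ‖v_k‖ < 1/|α_k| for all k and the series converges absolutely. Then v_k = 0 for every k; that is, each p_k is a left eigenvector of R with eigenvalue α_k (whenever p_k ≠ 0). -/

import Mathlib

set_option maxHeartbeats 1000000


/-- If `Σ_k α_k^n v_k = 0` for all `n ≥ 1`, with `1 > |α₀| > |α₁| > ⋯`,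
`‖v_k‖ < 1/|α_k|` and absolute convergence, where `v_k = α_k • p_k − R p_k`,
then every `v_k = 0`, i.e. every `p_k` is an eigenvector of `R` with
eigenvalue `α_k`. -/
theorem eigenvector_identification
    {E : Type*} [NormedAddCommGroup E] [NormedSpace ℂ E] [CompleteSpace E]
    (R : E →L[ℂ] E) (α : ℕ → ℂ) (p : ℕ → E) (v : ℕ → E)
    (hv : ∀ k, v k = α k • p k - R (p k))
    (hα0 : ∀ k, α k ≠ 0)
    (hαlt : ‖α 0‖ < 1)
    (hdec : StrictAnti fun k => ‖α k‖)
    (hbnd : ∀ k, ‖v k‖ < 1 / ‖α k‖)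
    (hsum : ∀ n : ℕ, 1 ≤ n → Summable fun k => ‖α k ^ n • v k‖)
    (hzero : ∀ n : ℕ, 1 ≤ n → ∑' k, α k ^ n • v k = 0) :
    ∀ k, v k = 0 := by
  intro k
  induction k using Nat.strong_induction_on with
  | _ m ih =>
  have habs_pos : ∀ j, 0 < ‖α j‖ := fun j => by
    simpa using (norm_pos_iff.mpr (hα0 j))
  set r : ℝ := ‖α (m + 1)‖ / ‖α m‖ with hrdef
  have hrlt : r < 1 := (div_lt_one (habs_pos m)).2 (hdec (Nat.lt_succ_self m))
  have hr0 : 0 ≤ r := div_nonneg (norm_nonneg _) (norm_nonneg _)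
  have hS1 : Summable fun k => ‖α k ^ 1 • v k‖ := hsum 1 le_rfl
  set C : ℝ := ∑' k, ‖α k ^ 1 • v k‖ with hCdef
  have hC0 : 0 ≤ C := tsum_nonneg fun _ => norm_nonneg _
  -- the tail sum at exponent 1 (shifted by m+1) is at most C
  have htail : (∑' i, ‖α (i + (m + 1)) ^ 1 • v (i + (m + 1))‖) ≤ C := by
    have h := Summable.sum_add_tsum_nat_add (f := fun k => ‖α k ^ 1 • v k‖) (m + 1) hS1
    have hnn : 0 ≤ ∑ i ∈ Finset.range (m + 1), ‖α i ^ 1 • v i‖ :=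
      Finset.sum_nonneg fun _ _ => norm_nonneg _
    rw [← hCdef] at h
    linarith
  have key : ∀ n : ℕ, ‖v m‖ ≤ r ^ n * (C / ‖α m‖) := by
    intro n
    have hn1 : 1 ≤ n + 1 := Nat.le_add_left 1 n
    set f : ℕ → E := fun k => α k ^ (n + 1) • v k with hfdef
    have hsumnorm : Summable fun k => ‖f k‖ := hsum (n + 1) hn1
    have hsumn : Summable f := hsumnorm.of_norm
    have h1 : ∑ i ∈ Finset.range m, f i = 0 :=
      Finset.sum_eq_zero fun i hi => by
        simp [hfdef, ih i (Finset.mem_range.1 hi)]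
    have h2 : ∑' i, f (i + m) = 0 := by
      have h := Summable.sum_add_tsum_nat_add (f := f) m hsumn
      rw [h1, hzero (n + 1) hn1] at h
      simpa using h
    have hshift : Summable fun i => f (i + m) := (summable_nat_add_iff (f := f) m).2 hsumn
    have h3 : f m = -∑' i, f (i + (m + 1)) := by
      have h := Summable.tsum_eq_zero_add hshift
      rw [h2] at h
      have hc : (∑' i, f (i + 1 + m)) = ∑' i, f (i + (m + 1)) :=
        tsum_congr fun b => by rw [show b + 1 + m = b + (m + 1) by omega]
      simp only [zero_add] at h
      rw [hc] at h
      exact eq_neg_of_add_eq_zero_left h.symm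
    have hshiftnorm : Summable fun i => ‖f (i + (m + 1))‖ :=
      (summable_nat_add_iff (f := fun k => ‖f k‖) (m + 1)).2 hsumnorm
    have h4 : ‖f m‖ ≤ ∑' i, ‖f (i + (m + 1))‖ := by
      rw [h3, norm_neg]
      exact norm_tsum_le_tsum_norm hshiftnorm
    -- termwise bound
    have hterm : ∀ i, ‖f (i + (m + 1))‖ ≤
        ‖α (m + 1)‖ ^ n * ‖α (i + (m + 1)) ^ 1 • v (i + (m + 1))‖ := by
      intro i
      have hle : ‖α (i + (m + 1))‖ ≤ ‖α (m + 1)‖ :=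
        hdec.antitone (Nat.le_add_left (m + 1) i)
      have hnn : 0 ≤ ‖α (i + (m + 1))‖ := norm_nonneg _
      simp only [hfdef, norm_smul, norm_pow, pow_one]
      have hpow : ‖α (i + (m + 1))‖ ^ (n + 1) ≤
          ‖α (m + 1)‖ ^ n * ‖α (i + (m + 1))‖ := by
        calc ‖α (i + (m + 1))‖ ^ (n + 1)
            = ‖α (i + (m + 1))‖ ^ n * ‖α (i + (m + 1))‖ := by
              ring
          _ ≤ ‖α (m + 1)‖ ^ n * ‖α (i + (m + 1))‖ := by
              gcongr
      calc ‖α (i + (m + 1))‖ ^ (n + 1) * ‖v (i + (m + 1))‖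
          ≤ (‖α (m + 1)‖ ^ n * ‖α (i + (m + 1))‖) * ‖v (i + (m + 1))‖ := by
            gcongr
        _ = ‖α (m + 1)‖ ^ n * (‖α (i + (m + 1))‖ * ‖v (i + (m + 1))‖) := by
            ring
    have h5 : (∑' i, ‖f (i + (m + 1))‖) ≤ ‖α (m + 1)‖ ^ n * C := by
      calc (∑' i, ‖f (i + (m + 1))‖)
          ≤ ∑' i, ‖α (m + 1)‖ ^ n * ‖α (i + (m + 1)) ^ 1 • v (i + (m + 1))‖ := by
            refine Summable.tsum_le_tsum hterm hshiftnorm ?_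
            exact ((summable_nat_add_iff (f := fun k => ‖α k ^ 1 • v k‖) (m + 1)).2 hS1).mul_left _
        _ = ‖α (m + 1)‖ ^ n * ∑' i, ‖α (i + (m + 1)) ^ 1 • v (i + (m + 1))‖ := by
            rw [tsum_mul_left]
        _ ≤ ‖α (m + 1)‖ ^ n * C := by
            have := pow_nonneg (norm_nonneg (α (m + 1))) n
            exact mul_le_mul_of_nonneg_left htail this
    have hfm : ‖f m‖ = ‖α m‖ ^ (n + 1) * ‖v m‖ := by
      simp [hfdef, norm_smul]
    have h6 : ‖α m‖ ^ (n + 1) * ‖v m‖ ≤ ‖α (m + 1)‖ ^ n * C := by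
      rw [← hfm]; exact h4.trans h5
    have hpos : 0 < ‖α m‖ ^ (n + 1) := pow_pos (habs_pos m) _
    rw [hrdef, div_pow, div_mul_div_comm, le_div_iff₀ (by positivity)]
    calc ‖v m‖ * (‖α m‖ ^ n * ‖α m‖)
        = ‖α m‖ ^ (n + 1) * ‖v m‖ := by ring
      _ ≤ ‖α (m + 1)‖ ^ n * C := h6
  -- take n → ∞
  have hlim : Filter.Tendsto (fun n : ℕ => r ^ n * (C / ‖α m‖))
      Filter.atTop (nhds 0) := by
    simpa using (tendsto_pow_atTop_nhds_zero_of_lt_one hr0 hrlt).mul_const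
      (C / ‖α m‖)
  have hle0 : ‖v m‖ ≤ 0 := ge_of_tendsto' hlim key
  exact norm_le_zero_iff.1 hle0
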